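/- For every ρ of the form ρ = μ(f) = ∫ ν a f dv with f nonnegative, not almost-everywhere zero, and ν(1+|v|²)f integrable, the dual function λ ↦ z(λ; ρ) = ∫ ν exp(λ·a) dv − λ·ρ attains its infimum over Λ = {λ : λ₂ < 0} at a unique point λ* ∈ Λ. -/

import Mathlib

open MeasureTheory Real Filter
open scoped Topology

noncomputable section

abbrev V3 : Type := Fin 3 → ℝ

def dot3 (a b : V3) : ℝ := ∑ i, a i * b i

def nsq (v : V3) : ℝ := ∑ i, (v i) ^ 2

abbrev L5 : Type := ℝ × V3 × ℝ

def dot5 (a b : L5) : ℝ := a.1 * b.1 + dot3 a.2.1 b.2.1 + a.2.2 * b.2.2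

def aVec (m : ℝ) (v : V3) : L5 := (m, m • v, m * nsq v)

def expA (m : ℝ) (l : L5) (v : V3) : ℝ := Real.exp (dot5 l (aVec m v))

def momVec (m : ℝ) (ν g : V3 → ℝ) : L5 :=
  (∫ v, ν v * (m * g v), fun i => ∫ v, ν v * (m * v i) * g v,
    ∫ v, ν v * (m * nsq v) * g v)

def zdual (m : ℝ) (ν : V3 → ℝ) (l ρ : L5) : ℝ :=
  (∫ v, ν v * expA m l v) - dot5 l ρ

def entH (z : ℝ) : ℝ := z * Real.log z - z

def dualCLM (ρ : L5) : L5 →L[ℝ] ℝ :=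
  LinearMap.toContinuousLinearMap
    { toFun := fun δ => dot5 δ ρ
      map_add' := by
        intro a b
        simp [dot5, dot3, Prod.fst_add, Prod.snd_add, Pi.add_apply, add_mul,
          Finset.sum_add_distrib]
        ring
      map_smul' := by
        intro c a
        simp only [dot5, dot3, Prod.smul_fst, Prod.smul_snd, Pi.smul_apply,
          smul_eq_mul, Finset.mul_sum, RingHom.id_apply]
        ring_nf
        rw [Finset.mul_sum]
        ring_nf }

lemma nsq_nonneg (v : V3) : 0 ≤ nsq v := Finset.sum_nonneg fun i _ => sq_nonneg _

lemma dot5_add_left (a b c : L5) : dot5 (a + b) c = dot5 a c + dot5 b c := by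
  simp [dot5, dot3, Finset.sum_add_distrib, add_mul]; ring

lemma dot5_smul_left (r : ℝ) (a c : L5) : dot5 (r • a) c = r * dot5 a c := by
  simp only [dot5, dot3, Prod.smul_fst, Prod.smul_snd, Pi.smul_apply, smul_eq_mul,
    mul_add, Finset.mul_sum]
  congr 1
  · congr 1
    · ring
    · apply Finset.sum_congr rfl; intros; ring
  · ring

lemma dot5_sub_left (a b c : L5) : dot5 (a - b) c = dot5 a c - dot5 b c := by
  have h := dot5_add_left (a - b) b c
  simp at h; linarith

lemma continuous_dot5_left (c : L5) : Continuous (fun l : L5 => dot5 l c) := by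
  unfold dot5 dot3
  fun_prop

lemma continuous_dot5_aVec (m : ℝ) (l : L5) :
    Continuous (fun v : V3 => dot5 l (aVec m v)) := by
  unfold dot5 dot3 aVec nsq
  simp only
  fun_prop

lemma expA_pos (m : ℝ) (l : L5) (v : V3) : 0 < expA m l v := Real.exp_pos _

lemma continuous_expA (m : ℝ) (l : L5) : Continuous (fun v => expA m l v) :=
  Real.continuous_exp.comp (continuous_dot5_aVec m l)

lemma abs_le_L5_fst (d : L5) : |d.1| ≤ ‖d‖ := norm_fst_le d
lemma abs_le_L5_mid (d : L5) (i : Fin 3) : |d.2.1 i| ≤ ‖d‖ :=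
  le_trans (le_trans (norm_le_pi_norm d.2.1 i) (norm_fst_le d.2)) (norm_snd_le d)
lemma abs_le_L5_snd (d : L5) : |d.2.2| ≤ ‖d‖ :=
  le_trans (norm_snd_le d.2) (norm_snd_le d)

lemma abs_dot5_aVec_le (m : ℝ) (hm : 0 ≤ m) (d : L5) (v : V3) :
    |dot5 d (aVec m v)| ≤ (5/2) * m * ‖d‖ * (1 + nsq v) := by
  have h1 : |d.1 * m| ≤ ‖d‖ * m := by
    rw [abs_mul, abs_of_nonneg hm]
    exact mul_le_mul_of_nonneg_right (abs_le_L5_fst d) hm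
  have h2 : |dot3 d.2.1 (m • v)| ≤ ‖d‖ * m * (3/2) * (1 + nsq v) := by
    unfold dot3
    calc |∑ i, d.2.1 i * (m • v) i| ≤ ∑ i, |d.2.1 i * (m • v) i| :=
          Finset.abs_sum_le_sum_abs _ _
      _ ≤ ∑ i : Fin 3, ‖d‖ * m * ((1 + nsq v)/2) := by
          apply Finset.sum_le_sum
          intro i _
          have hvi : |v i| ≤ (1 + nsq v)/2 := by
            have h1 : (v i)^2 ≤ nsq v := by
              unfold nsq
              exact Finset.single_le_sum (f := fun j => (v j)^2)
                (fun j _ => sq_nonneg _) (Finset.mem_univ i)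
            nlinarith [sq_nonneg (|v i| - 1), sq_abs (v i)]
          calc |d.2.1 i * (m • v) i| = |d.2.1 i| * (m * |v i|) := by
                simp [abs_mul, abs_of_nonneg hm, mul_assoc]
            _ ≤ ‖d‖ * (m * ((1 + nsq v)/2)) := by
                apply mul_le_mul (abs_le_L5_mid d i)
                  (mul_le_mul_of_nonneg_left hvi hm)
                  (by positivity) (le_trans (abs_nonneg _) (abs_le_L5_mid d i))
            _ = ‖d‖ * m * ((1 + nsq v)/2) := by ring
      _ = ‖d‖ * m * (3/2) * (1 + nsq v) := by
          simp [Finset.sum_const]; ring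
  have h3 : |d.2.2 * (m * nsq v)| ≤ ‖d‖ * m * nsq v := by
    rw [abs_mul, abs_mul, abs_of_nonneg hm, abs_of_nonneg (nsq_nonneg v)]
    have h := abs_le_L5_snd d
    have hn := nsq_nonneg v
    calc |d.2.2| * (m * nsq v) ≤ ‖d‖ * (m * nsq v) :=
          mul_le_mul_of_nonneg_right h (by positivity)
      _ = ‖d‖ * m * nsq v := by ring
  have hd : 0 ≤ ‖d‖ := norm_nonneg d
  unfold dot5 aVec
  simp only
  have := abs_add_three (d.1 * m) (dot3 d.2.1 (m • v)) (d.2.2 * (m * nsq v))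
  have hn := nsq_nonneg v
  calc |d.1 * m + dot3 d.2.1 (m • v) + d.2.2 * (m * nsq v)|
      ≤ |d.1 * m| + |dot3 d.2.1 (m • v)| + |d.2.2 * (m * nsq v)| := this
    _ ≤ ‖d‖ * m + ‖d‖ * m * (3/2) * (1 + nsq v) + ‖d‖ * m * nsq v := by
        linarith
    _ ≤ (5/2) * m * ‖d‖ * (1 + nsq v) := by nlinarith
lemma nsq_eq_null (r : ℝ) : volume {v : V3 | nsq v = r} = 0 := by
  have hmeas : MeasurableSet {v : V3 | nsq v = r} := by
    have : Continuous nsq := by unfold nsq; fun_prop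
    exact (isClosed_eq this continuous_const).measurableSet
  have := (EuclideanSpace.volume_preserving_symm_measurableEquiv_toLp (ι := Fin 3)).measure_preimage
    hmeas.nullMeasurableSet
  rw [← this]
  have hset : (MeasurableEquiv.toLp 2 (Fin 3 → ℝ)).symm ⁻¹' {v : V3 | nsq v = r}
      = {x : EuclideanSpace ℝ (Fin 3) | ‖x‖ ^ 2 = r} := by
    ext x
    simp only [Set.mem_preimage, Set.mem_setOf_eq]
    have : nsq ((MeasurableEquiv.toLp 2 (Fin 3 → ℝ)).symm x) = ‖x‖ ^ 2 := by
      rw [EuclideanSpace.norm_eq]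
      rw [Real.sq_sqrt (Finset.sum_nonneg fun i _ => sq_nonneg _)]
      unfold nsq
      simp [sq_abs]
    rw [this]
  rw [hset]
  rcases lt_or_ge r 0 with hr | hr
  · convert measure_empty
    · ext x; simp only [Set.mem_setOf_eq, Set.mem_empty_iff_false, iff_false]
      intro h; nlinarith [sq_nonneg ‖x‖]
    · infer_instance
  · have : {x : EuclideanSpace ℝ (Fin 3) | ‖x‖ ^ 2 = r} = Metric.sphere 0 (Real.sqrt r) := by
      ext x
      simp only [Set.mem_setOf_eq, mem_sphere_iff_norm, sub_zero]
      constructor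
      · intro h; rw [← h, Real.sqrt_sq (norm_nonneg _)]
      · intro h; rw [h, Real.sq_sqrt hr]
    rw [this]
    exact Measure.addHaar_sphere volume 0 _

def dotL (c : V3) : V3 →ₗ[ℝ] ℝ where
  toFun := fun v => dot3 c v
  map_add' := by intro a b; simp [dot3, mul_add, Finset.sum_add_distrib]
  map_smul' := by
    intro r a
    simp only [dot3, Pi.smul_apply, smul_eq_mul, RingHom.id_apply, Finset.mul_sum]
    apply Finset.sum_congr rfl; intros; ring

lemma hyperplane_null (c : V3) (hc : c ≠ 0) (b : ℝ) :
    volume {v : V3 | dot3 c v = b} = 0 := by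
  obtain ⟨i0, hi0⟩ : ∃ i, c i ≠ 0 := by
    by_contra h
    push_neg at h
    exact hc (funext h)
  have hsingle : ∀ t : ℝ, dot3 c (fun j => if j = i0 then t else 0) = t * c i0 := by
    intro t
    unfold dot3
    rw [Finset.sum_eq_single i0]
    · simp; ring
    · intro j _ hj; simp [hj]
    · simp
  set v0 : V3 := fun j => if j = i0 then b / c i0 else 0 with hv0
  have hv0b : dot3 c v0 = b := by
    rw [hv0, hsingle]; field_simp
  set K := LinearMap.ker (dotL c) with hK
  have hKne : K ≠ ⊤ := by
    intro h
    have hx : (fun j => if j = i0 then (1:ℝ) else 0 : V3) ∈ K := h ▸ Submodule.mem_top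
    have : dot3 c (fun j => if j = i0 then (1:ℝ) else 0) = 0 := hx
    rw [hsingle] at this
    simp at this
    exact hi0 this
  have hset : {v : V3 | dot3 c v = b} = (fun v : V3 => v + (-v0)) ⁻¹' (K : Set V3) := by
    ext v
    simp only [Set.mem_setOf_eq, Set.mem_preimage, SetLike.mem_coe, hK,
      LinearMap.mem_ker]
    have : dotL c (v + (-v0)) = dot3 c v - b := by
      rw [map_add, map_neg]
      show dot3 c v + -(dot3 c v0) = _
      rw [hv0b]; ring
    rw [this]
    constructor <;> intro h <;> linarith
  rw [hset, measure_preimage_add_right]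
  exact Measure.addHaar_submodule volume K hKne

lemma quad_null (c0 : ℝ) (c1 : V3) (c2 : ℝ) (h : ¬(c0 = 0 ∧ c1 = 0 ∧ c2 = 0)) :
    volume {v : V3 | c0 + dot3 c1 v + c2 * nsq v = 0} = 0 := by
  rcases eq_or_ne c2 0 with h2 | h2
  · subst h2
    rcases eq_or_ne c1 0 with h1 | h1
    · subst h1
      have hc0 : c0 ≠ 0 := by
        intro h0; exact h ⟨h0, rfl, rfl⟩
      convert measure_empty
      · ext v; simp only [Set.mem_setOf_eq, Set.mem_empty_iff_false, iff_false, dot3]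
        simp [hc0]
      · infer_instance
    · have : {v : V3 | c0 + dot3 c1 v + 0 * nsq v = 0} = {v : V3 | dot3 c1 v = -c0} := by
        ext v; simp only [Set.mem_setOf_eq]; constructor <;> intro hh <;> linarith
      rw [this]
      exact hyperplane_null c1 h1 (-c0)
  · set b : V3 := (1 / (2 * c2)) • c1 with hb
    set r : ℝ := nsq b - c0 / c2 with hr
    have key : ∀ v : V3, c0 + dot3 c1 v + c2 * nsq v = c2 * (nsq (v + b) - r) := by
      intro v
      rw [hr, hb]
      simp only [nsq, dot3, Pi.add_apply, Pi.smul_apply, smul_eq_mul]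
      rw [Fin.sum_univ_three, Fin.sum_univ_three, Fin.sum_univ_three, Fin.sum_univ_three]
      field_simp
      ring
    have hset : {v : V3 | c0 + dot3 c1 v + c2 * nsq v = 0}
        = (fun v : V3 => v + b) ⁻¹' {w : V3 | nsq w = r} := by
      ext v
      simp only [Set.mem_setOf_eq, Set.mem_preimage, key v]
      constructor
      · intro hh
        rcases mul_eq_zero.1 hh with hc | hc
        · exact absurd hc h2
        · linarith
      · intro hh; rw [hh]; ring
    rw [hset, measure_preimage_add_right]
    exact nsq_eq_null r

lemma aVec_zero_null (m : ℝ) (hm : 0 < m) (d : L5) (hd : d ≠ 0) :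
    volume {v : V3 | dot5 d (aVec m v) = 0} = 0 := by
  have key : ∀ v : V3, dot5 d (aVec m v) = m * (d.1 + dot3 d.2.1 v + d.2.2 * nsq v) := by
    intro v
    simp only [dot5, aVec, dot3, nsq, Pi.smul_apply, smul_eq_mul, Fin.sum_univ_three]
    ring
  have hset : {v : V3 | dot5 d (aVec m v) = 0}
      = {v : V3 | d.1 + dot3 d.2.1 v + d.2.2 * nsq v = 0} := by
    ext v
    simp only [Set.mem_setOf_eq, key v, mul_eq_zero]
    constructor
    · intro hh; rcases hh with hc | hc
      · exact absurd hc (ne_of_gt hm)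
      · exact hc
    · intro hh; right; exact hh
  rw [hset]
  apply quad_null
  intro ⟨h1, h2, h3⟩
  apply hd
  exact Prod.ext h1 (Prod.ext h2 h3)
lemma abs_vi_le (v : V3) (i : Fin 3) : |v i| ≤ (1 + nsq v) / 2 := by
  have h1 : (v i)^2 ≤ nsq v := by
    unfold nsq
    exact Finset.single_le_sum (f := fun j => (v j)^2) (fun j _ => sq_nonneg _)
      (Finset.mem_univ i)
  nlinarith [sq_nonneg (|v i| - 1), sq_abs (v i)]

lemma measurable_nsq : Measurable nsq := by unfold nsq; fun_prop

lemma integrable_nu_gf (ν f g : V3 → ℝ) (hν : Measurable ν) (hf : Measurable f)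
    (hg : Measurable g) (hf0 : ∀ v, 0 ≤ f v) (hν0 : ∀ v, 0 ≤ ν v)
    (C : ℝ) (hgC : ∀ v, |g v| ≤ C * (1 + nsq v))
    (hfint : Integrable (fun v => ν v * (1 + nsq v) * f v)) :
    Integrable (fun v => ν v * g v * f v) := by
  apply Integrable.mono (hfint.const_mul C)
  · exact ((hν.mul hg).mul hf).aestronglyMeasurable
  · filter_upwards with v
    have hn := nsq_nonneg v
    have h0 : ‖ν v * g v * f v‖ = ν v * |g v| * f v := by
      rw [Real.norm_eq_abs, abs_mul, abs_mul, abs_of_nonneg (hν0 v), abs_of_nonneg (hf0 v)]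
    rw [h0, Real.norm_eq_abs]
    have h1 : ν v * |g v| * f v ≤ ν v * (C * (1 + nsq v)) * f v := by
      apply mul_le_mul_of_nonneg_right _ (hf0 v)
      exact mul_le_mul_of_nonneg_left (hgC v) (hν0 v)
    calc ν v * |g v| * f v ≤ ν v * (C * (1 + nsq v)) * f v := h1
      _ = C * (ν v * (1 + nsq v) * f v) := by ring
      _ ≤ |C * (ν v * (1 + nsq v) * f v)| := le_abs_self _

section WithHyp

variable (m : ℝ) (ν f : V3 → ℝ)

lemma dot5_momVec (hm : 0 < m) (hν : Measurable ν) (hν0 : ∀ v, 0 ≤ ν v)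
    (hf : Measurable f) (hf0 : ∀ v, 0 ≤ f v)
    (hfint : Integrable (fun v => ν v * (1 + nsq v) * f v)) (l : L5) :
    dot5 l (momVec m ν f) = ∫ v, ν v * dot5 l (aVec m v) * f v := by
  have hmne := hm.le
  have I0 : Integrable (fun v => ν v * m * f v) := by
    apply integrable_nu_gf ν f (fun _ => m) hν hf measurable_const hf0 hν0 m _ hfint
    intro v
    have := nsq_nonneg v
    rw [abs_of_nonneg hmne]; nlinarith
  have Ii : ∀ i : Fin 3, Integrable (fun v => ν v * (m * v i) * f v) := by
    intro i
    apply integrable_nu_gf ν f (fun v => m * v i) hν hf (measurable_const.mul (measurable_pi_apply i)) hf0 hν0 m _ hfint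
    intro v
    have h := abs_vi_le v i
    have := nsq_nonneg v
    rw [abs_mul, abs_of_nonneg hmne]
    nlinarith
  have I2 : Integrable (fun v => ν v * (m * nsq v) * f v) := by
    apply integrable_nu_gf ν f (fun v => m * nsq v) hν hf (measurable_const.mul measurable_nsq) hf0 hν0 m _ hfint
    intro v
    have := nsq_nonneg v
    rw [abs_mul, abs_of_nonneg hmne, abs_of_nonneg (nsq_nonneg v)]
    nlinarith
  have I0' : Integrable (fun v => ν v * (m * f v)) := by
    simpa [mul_assoc] using I0
  -- expand dot5 l (momVec m ν f)
  have expand : dot5 l (momVec m ν f)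
      = l.1 * (∫ v, ν v * (m * f v)) + (∑ i, l.2.1 i * (∫ v, ν v * (m * v i) * f v))
        + l.2.2 * (∫ v, ν v * (m * nsq v) * f v) := by
    simp only [dot5, momVec, dot3]
  rw [expand]
  rw [← integral_const_mul, ← integral_const_mul]
  have hsum : (∑ i, l.2.1 i * (∫ v, ν v * (m * v i) * f v))
      = ∫ v, ∑ i, l.2.1 i * (ν v * (m * v i) * f v) := by
    rw [integral_finset_sum]
    · apply Finset.sum_congr rfl
      intro i _
      rw [integral_const_mul]
    · intro i _
      exact (Ii i).const_mul _
  rw [hsum]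
  rw [← integral_add, ← integral_add]
  · apply integral_congr_ae
    filter_upwards with v
    simp only [dot5, aVec, dot3, Pi.smul_apply, smul_eq_mul, Fin.sum_univ_three]
    ring
  · exact (I0'.const_mul _).add (integrable_finset_sum _ (fun i _ => (Ii i).const_mul _))
  · exact I2.const_mul _
  · exact I0'.const_mul _
  · exact integrable_finset_sum _ (fun i _ => (Ii i).const_mul _)

end WithHyp
lemma dot5_perturb (m : ℝ) (l : L5) (c : ℝ) (v : V3) :
    dot5 (l + c • ((1:ℝ), (0:V3), (1:ℝ))) (aVec m v)
      = dot5 l (aVec m v) + c * (m * (1 + nsq v)) := by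
  rw [dot5_add_left, dot5_smul_left]
  simp only [dot5, aVec, dot3, Pi.zero_apply, zero_mul, Finset.sum_const_zero]
  ring

lemma continuousAt_zdual (m : ℝ) (hm : 0 < m) (ν : V3 → ℝ) (hνmeas : Measurable ν)
    (hνpos : ∀ v, 0 < ν v)
    (hass : ∀ l : L5, Integrable (fun v => ν v * expA m l v) ↔ l.2.2 < 0)
    (ρ : L5) (l0 : L5) (hl0 : l0.2.2 < 0) :
    ContinuousAt (fun l : L5 => zdual m ν l ρ) l0 := by
  have hcontI : ContinuousAt (fun l : L5 => ∫ v, ν v * expA m l v) l0 := by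
    set ε : ℝ := -l0.2.2 / 5 with hε_def
    have hε : 0 < ε := by
      apply div_pos (by linarith) (by norm_num)
    set mu : L5 := l0 + ((5/2) * ε) • ((1:ℝ), (0:V3), (1:ℝ)) with hmu
    have hmu2 : mu.2.2 = l0.2.2 / 2 := by
      simp only [hmu, Prod.snd_add, Prod.smul_snd, smul_eq_mul, hε_def]
      ring
    have hmuneg : mu.2.2 < 0 := by rw [hmu2]; linarith
    apply continuousAt_of_dominated (bound := fun v => ν v * expA m mu v)
    · filter_upwards with l
      exact (hνmeas.mul (continuous_expA m l).measurable).aestronglyMeasurable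
    · filter_upwards [Metric.ball_mem_nhds l0 hε] with l hl
      filter_upwards with v
      have hd : dot5 l (aVec m v) ≤ dot5 mu (aVec m v) := by
        rw [hmu, dot5_perturb]
        have h1 : dot5 l (aVec m v) - dot5 l0 (aVec m v) = dot5 (l - l0) (aVec m v) :=
          (dot5_sub_left l l0 (aVec m v)).symm
        have h2 : |dot5 (l - l0) (aVec m v)| ≤ (5/2) * m * ‖l - l0‖ * (1 + nsq v) :=
          abs_dot5_aVec_le m hm.le (l - l0) v
        have h3 : ‖l - l0‖ < ε := by
          rw [Metric.mem_ball, dist_eq_norm] at hl; exact hl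
        have hn : (0:ℝ) ≤ 1 + nsq v := by have := nsq_nonneg v; linarith
        have h4 : (5/2) * m * ‖l - l0‖ * (1 + nsq v) ≤ (5/2) * m * ε * (1 + nsq v) := by
          apply mul_le_mul_of_nonneg_right _ hn
          have : (0:ℝ) < (5/2) * m := by linarith
          nlinarith
        have h5 := le_of_abs_le h2
        nlinarith [abs_nonneg (dot5 (l - l0) (aVec m v))]
      have hν0 := (hνpos v).le
      rw [Real.norm_eq_abs, abs_of_nonneg (mul_pos (hνpos v) (expA_pos m l v)).le]
      exact mul_le_mul_of_nonneg_left (Real.exp_le_exp.2 hd) hν0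
    · exact (hass mu).2 hmuneg
    · filter_upwards with v
      exact continuousAt_const.mul
        (Real.continuous_exp.comp (continuous_dot5_left (aVec m v))).continuousAt
  exact hcontI.sub ((continuous_dot5_left ρ).continuousAt)
lemma exp_ge_sq_div_four {z : ℝ} (hz : 0 ≤ z) : z^2/4 ≤ Real.exp z := by
  have h := Real.add_one_le_exp (z/2)
  have h3 : Real.exp z = Real.exp (z/2) * Real.exp (z/2) := by
    rw [← Real.exp_add]; ring_nf
  nlinarith [Real.exp_pos (z/2), sq_nonneg (z/2)]

lemma coercive_arithB {T κ s : ℝ} (hκ : 0 < κ) (h : 2 * (|s| + 1) / κ < T) :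
    s < T * (κ/2) := by
  rw [div_lt_iff₀ hκ] at h
  nlinarith [le_abs_self s]

lemma coercive_arithA {K c T C s : ℝ} (hK : 0 < K) (hc : 0 < c) (hC : 0 ≤ C)
    (h1 : 1 < T) (h2 : 16 * (C + |s| + 1) / (K * c^2) < T) :
    s < K * Real.exp (T * (c/2)) - T * C := by
  have hKc : 0 < K * c^2 := by positivity
  rw [div_lt_iff₀ hKc] at h2
  have hexp2 : (T * (c/2))^2 / 4 ≤ Real.exp (T * (c/2)) :=
    exp_ge_sq_div_four (by positivity)
  have h3 : K * ((T * (c/2))^2 / 4) ≤ K * Real.exp (T * (c/2)) :=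
    mul_le_mul_of_nonneg_left hexp2 hK.le
  have hq : K * ((T * (c/2))^2 / 4) = T * (T * (K * c^2)) / 16 := by ring
  rw [hq] at h3
  have h4 : T * (16 * (C + |s| + 1)) ≤ T * (T * (K * c^2)) :=
    mul_le_mul_of_nonneg_left h2.le (by linarith)
  have h5 : |s| + 1 ≤ T * (|s| + 1) :=
    le_mul_of_one_le_left (by positivity) h1.le
  have h6 : T * (C + |s| + 1) = T * C + T * (|s| + 1) := by ring
  have h7 : T * (16 * (C + |s| + 1)) = 16 * (T * (C + |s| + 1)) := by ring
  nlinarith [le_abs_self s]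
lemma abs_dot5_le (d c : L5) :
    |dot5 d c| ≤ ‖d‖ * (|c.1| + (∑ i, |c.2.1 i|) + |c.2.2|) := by
  have h1 : |d.1 * c.1| ≤ ‖d‖ * |c.1| := by
    rw [abs_mul]
    exact mul_le_mul_of_nonneg_right (abs_le_L5_fst d) (abs_nonneg _)
  have h2 : |dot3 d.2.1 c.2.1| ≤ ‖d‖ * ∑ i, |c.2.1 i| := by
    unfold dot3
    calc |∑ i, d.2.1 i * c.2.1 i| ≤ ∑ i, |d.2.1 i * c.2.1 i| := Finset.abs_sum_le_sum_abs _ _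
      _ ≤ ∑ i, ‖d‖ * |c.2.1 i| := by
          apply Finset.sum_le_sum
          intro i _
          rw [abs_mul]
          exact mul_le_mul_of_nonneg_right (abs_le_L5_mid d i) (abs_nonneg _)
      _ = ‖d‖ * ∑ i, |c.2.1 i| := by rw [Finset.mul_sum]
  have h3 : |d.2.2 * c.2.2| ≤ ‖d‖ * |c.2.2| := by
    rw [abs_mul]
    exact mul_le_mul_of_nonneg_right (abs_le_L5_snd d) (abs_nonneg _)
  calc |dot5 d c| ≤ |d.1 * c.1| + |dot3 d.2.1 c.2.1| + |d.2.2 * c.2.2| :=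
        abs_add_three _ _ _
    _ ≤ ‖d‖ * |c.1| + ‖d‖ * (∑ i, |c.2.1 i|) + ‖d‖ * |c.2.2| := by linarith
    _ = ‖d‖ * (|c.1| + (∑ i, |c.2.1 i|) + |c.2.2|) := by ring

set_option maxHeartbeats 1600000 in
lemma exists_min
    (m : ℝ) (hm : 0 < m)
    (ν : V3 → ℝ) (hνmeas : Measurable ν) (hνpos : ∀ v, 0 < ν v)
    (hass : ∀ l : L5, Integrable (fun v => ν v * expA m l v) ↔ l.2.2 < 0)
    (f : V3 → ℝ) (hfmeas : Measurable f) (hf0 : ∀ v, 0 ≤ f v)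
    (hfne : ¬ f =ᵐ[volume] (fun _ => (0 : ℝ)))
    (hfint : Integrable (fun v => ν v * (1 + nsq v) * f v)) :
    ∃ lstar : L5, lstar.2.2 < 0 ∧
      ∀ l : L5, l.2.2 < 0 →
        zdual m ν lstar (momVec m ν f) ≤ zdual m ν l (momVec m ν f) := by
  set ρ : L5 := momVec m ν f with hρ
  set F : L5 → ℝ := fun l => zdual m ν l ρ with hFdef
  have hFval : ∀ l : L5, F l = (∫ v, ν v * expA m l v) - dot5 l ρ := fun l => rfl
  set Cρ : ℝ := |ρ.1| + (∑ i, |ρ.2.1 i|) + |ρ.2.2| with hCρ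
  have hCρ0 : 0 ≤ Cρ := by
    rw [hCρ]
    have : (0:ℝ) ≤ ∑ i, |ρ.2.1 i| := Finset.sum_nonneg fun i _ => abs_nonneg _
    have := abs_nonneg ρ.1
    have := abs_nonneg ρ.2.2
    linarith
  have habs : ∀ d : L5, |dot5 d ρ| ≤ ‖d‖ * Cρ := fun d => abs_dot5_le d ρ
  clear_value Cρ
  set l₀ : L5 := ((0:ℝ), (0:V3), (-1:ℝ)) with hl₀def
  have hl₀ : l₀.2.2 < 0 := by norm_num [hl₀def]
  set s : ℝ := F l₀ with hs
  set S : Set L5 := {l | l.2.2 < 0 ∧ F l ≤ s} with hSdef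
  have hl₀S : l₀ ∈ S := ⟨hl₀, le_refl _⟩
  clear_value s
  -- S is closed
  have hScl : IsClosed S := by
    apply IsSeqClosed.isClosed
    intro x p hxS hxp
    have hsnd : Continuous (fun l : L5 => l.2.2) := continuous_snd.comp continuous_snd
    have hp2 : p.2.2 ≤ 0 := by
      have ht : Tendsto (fun n => (x n).2.2) atTop (𝓝 p.2.2) := (hsnd.tendsto p).comp hxp
      exact le_of_tendsto ht (Eventually.of_forall fun n => (hxS n).1.le)
    rcases lt_or_eq_of_le hp2 with hplt | hpeq
    · refine ⟨hplt, ?_⟩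
      have hclose := continuousAt_zdual m hm ν hνmeas hνpos hass ρ p hplt
      have ht : Tendsto (fun n => F (x n)) atTop (𝓝 (F p)) := hclose.tendsto.comp hxp
      exact le_of_tendsto ht (Eventually.of_forall fun n => (hxS n).2)
    · exfalso
      set g : V3 → ℝ := fun v => ν v * expA m p v with hg
      have hgmeas : Measurable g := hνmeas.mul (continuous_expA m p).measurable
      have hgnotint : ¬ Integrable g := by
        intro h
        rw [hass p, ← hpeq] at h
        exact lt_irrefl _ h
      have htop : (∫⁻ v, ENNReal.ofReal (g v)) = ⊤ := by
        by_contra hne'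
        apply hgnotint
        refine ⟨hgmeas.aestronglyMeasurable, ?_⟩
        rw [hasFiniteIntegral_iff_ofReal
          (Eventually.of_forall fun v => (mul_pos (hνpos v) (expA_pos _ _ _)).le)]
        exact lt_top_iff_ne_top.2 hne'
      set B : ℝ := s + (‖p‖ + 1) * Cρ with hB
      have hbound : ∀ᶠ n in atTop, (∫⁻ v, ENNReal.ofReal (ν v * expA m (x n) v))
          ≤ ENNReal.ofReal B := by
        have hnormt : Tendsto (fun n => ‖x n‖) atTop (𝓝 ‖p‖) := hxp.norm
        have hnorm : ∀ᶠ n in atTop, ‖x n‖ ≤ ‖p‖ + 1 :=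
          hnormt.eventually_le_const (lt_add_one ‖p‖)
        filter_upwards [hnorm] with n hn
        have hint : Integrable (fun v => ν v * expA m (x n) v) := (hass _).2 (hxS n).1
        have hnn : 0 ≤ᵐ[volume] fun v => ν v * expA m (x n) v :=
          Eventually.of_forall fun v => (mul_pos (hνpos v) (expA_pos _ _ _)).le
        rw [← ofReal_integral_eq_lintegral_ofReal hint hnn]
        apply ENNReal.ofReal_le_ofReal
        have h1 : (∫ v, ν v * expA m (x n) v) = F (x n) + dot5 (x n) ρ := by
          rw [hFval]; ring
        have h2 : dot5 (x n) ρ ≤ ‖x n‖ * Cρ := le_trans (le_abs_self _) (habs _)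
        have h3 : ‖x n‖ * Cρ ≤ (‖p‖ + 1) * Cρ := mul_le_mul_of_nonneg_right hn hCρ0
        have h4 := (hxS n).2
        rw [h1, hB]
        linarith
      have hfatou := lintegral_liminf_le (μ := volume) (u := (atTop : Filter ℕ))
        (f := fun n v => ENNReal.ofReal (ν v * expA m (x n) v))
        (fun n => (hνmeas.mul (continuous_expA m (x n)).measurable).ennreal_ofReal)
      have hlim : ∀ v, Filter.liminf (fun n => ENNReal.ofReal (ν v * expA m (x n) v)) atTop
          = ENNReal.ofReal (g v) := by
        intro v
        apply Filter.Tendsto.liminf_eq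
        apply ENNReal.tendsto_ofReal
        have hc : Continuous fun l : L5 => ν v * expA m l v :=
          continuous_const.mul (Real.continuous_exp.comp (continuous_dot5_left (aVec m v)))
        exact (hc.tendsto p).comp hxp
      have h1 : (∫⁻ v, ENNReal.ofReal (g v)) ≤ ENNReal.ofReal B := by
        calc (∫⁻ v, ENNReal.ofReal (g v))
            = ∫⁻ v, Filter.liminf (fun n => ENNReal.ofReal (ν v * expA m (x n) v)) atTop := by
              apply lintegral_congr
              intro v
              rw [hlim v]
          _ ≤ Filter.liminf (fun n => ∫⁻ v, ENNReal.ofReal (ν v * expA m (x n) v)) atTop :=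
              hfatou
          _ ≤ Filter.liminf (fun _ : ℕ => ENNReal.ofReal B) atTop :=
              Filter.liminf_le_liminf hbound
          _ = ENNReal.ofReal B := Filter.liminf_const _
      rw [htop] at h1
      exact ENNReal.ofReal_ne_top (top_le_iff.1 h1)
  -- S is bounded
  have hSbd : Bornology.IsBounded S := by
    by_contra hnb
    have hub : ∀ n : ℕ, ∃ l, l ∈ S ∧ (n : ℝ) < ‖l‖ := by
      intro n
      by_contra hcon
      push_neg at hcon
      exact hnb (isBounded_iff_forall_norm_le.2 ⟨n, fun y hy => hcon y hy⟩)
    choose x hxS hxn using hub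
    have hxne : ∀ n, x n ≠ 0 := by
      intro n h
      have h1 := hxn n
      rw [h, norm_zero] at h1
      exact absurd h1 (not_lt.2 (Nat.cast_nonneg n))
    set w : ℕ → L5 := fun n => ‖x n‖⁻¹ • x n with hw
    have hwn : ∀ n, w n ∈ Metric.sphere (0 : L5) 1 := by
      intro n
      rw [mem_sphere_zero_iff_norm, hw]
      simp only
      rw [norm_smul, norm_inv, norm_norm]
      exact inv_mul_cancel₀ (norm_ne_zero_iff.2 (hxne n))
    obtain ⟨ω, hωmem, φ, hφmono, hφtend⟩ := (isCompact_sphere (0:L5) 1).tendsto_subseq hwn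
    have hω1 : ‖ω‖ = 1 := mem_sphere_zero_iff_norm.1 hωmem
    set t : ℕ → ℝ := fun n => ‖x (φ n)‖ with ht
    have htpos : ∀ n, 0 < t n := fun n => norm_pos_iff.2 (hxne _)
    have htlb : ∀ n : ℕ, (n:ℝ) ≤ t n := by
      intro n
      have h1 : (n:ℝ) ≤ (φ n : ℝ) := Nat.cast_le.2 hφmono.le_apply
      exact le_trans h1 (hxn (φ n)).le
    have hxw : ∀ n, x (φ n) = t n • w (φ n) := by
      intro n
      rw [hw, ht]
      simp only
      rw [smul_smul, mul_inv_cancel₀ (norm_ne_zero_iff.2 (hxne _)), one_smul]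
    have hdotx : ∀ n (y : L5), dot5 (x (φ n)) y = t n * dot5 (w (φ n)) y := by
      intro n y; rw [hxw n, dot5_smul_left]
    clear_value t w
    have hFle : ∀ n, F (x (φ n)) ≤ s := fun n => (hxS (φ n)).2
    have hInt : ∀ n, Integrable (fun v => ν v * expA m (x (φ n)) v) :=
      fun n => (hass _).2 (hxS (φ n)).1
    have hIntNN : ∀ n, 0 ≤ᵐ[volume] fun v => ν v * expA m (x (φ n)) v :=
      fun n => Eventually.of_forall fun v => (mul_pos (hνpos v) (expA_pos _ _ _)).le
    by_cases hcase : ∃ v0 : V3, 0 < dot5 ω (aVec m v0)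
    · -- Case A : the direction sees positive values of the exponent
      obtain ⟨v0, hv0⟩ := hcase
      set c : ℝ := dot5 ω (aVec m v0) / 2 with hc
      have hcpos : 0 < c := by rw [hc]; linarith
      set R : ℝ := ‖v0‖ + 1 with hR
      have hRpos : 0 < R := by rw [hR]; positivity
      set U : Set V3 := {v | c < dot5 ω (aVec m v)} ∩ Metric.ball (0:V3) R with hU
      have hUopen : IsOpen U :=
        (isOpen_lt continuous_const (continuous_dot5_aVec m ω)).inter Metric.isOpen_ball
      have hv0U : v0 ∈ U := by
        constructor
        · show c < dot5 ω (aVec m v0)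
          rw [hc]; linarith
        · rw [Metric.mem_ball, dist_zero_right, hR]; linarith
      have hUmeas : MeasurableSet U := hUopen.measurableSet
      have hUpos : 0 < volume U := hUopen.measure_pos volume ⟨v0, hv0U⟩
      have hnsqU : ∀ v ∈ U, nsq v ≤ 3 * R^2 := by
        intro v hv
        have hvn : ‖v‖ < R := by
          have h2 := hv.2
          rwa [Metric.mem_ball, dist_zero_right] at h2
        have hb : ∀ i, (v i)^2 ≤ R^2 := by
          intro i
          have h1 : |v i| ≤ R := le_trans (norm_le_pi_norm v i) hvn.le
          nlinarith [abs_nonneg (v i), sq_abs (v i)]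
        have hb0 := hb 0
        have hb1 := hb 1
        have hb2 := hb 2
        simp only [nsq, Fin.sum_univ_three]
        linarith
      have hνint : IntegrableOn ν U := by
        have hint0 : Integrable (fun v => ν v * expA m l₀ v) := (hass l₀).2 hl₀
        apply Integrable.mono
          ((hint0.const_mul (Real.exp (3*m*R^2))).integrableOn (s := U))
          hνmeas.aestronglyMeasurable.restrict
        rw [ae_restrict_iff' hUmeas]
        filter_upwards with v hv
        have hexp : dot5 l₀ (aVec m v) = -(m * nsq v) := by
          simp [hl₀def, dot5, aVec, dot3]
        have h1 : (1:ℝ) ≤ Real.exp (3*m*R^2) * expA m l₀ v := by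
          rw [expA, hexp, ← Real.exp_add]
          apply Real.one_le_exp
          have := hnsqU v hv
          nlinarith
        have hνv := (hνpos v).le
        rw [Real.norm_eq_abs, abs_of_nonneg hνv, Real.norm_eq_abs]
        calc ν v = ν v * 1 := (mul_one _).symm
          _ ≤ ν v * (Real.exp (3*m*R^2) * expA m l₀ v) :=
              mul_le_mul_of_nonneg_left h1 hνv
          _ = Real.exp (3*m*R^2) * (ν v * expA m l₀ v) := by ring
          _ ≤ |Real.exp (3*m*R^2) * (ν v * expA m l₀ v)| := le_abs_self _
      set K : ℝ := ∫ v in U, ν v with hK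
      have hKpos : 0 < K := by
        rw [hK, setIntegral_pos_iff_support_of_nonneg_ae
          (Eventually.of_forall fun v => (hνpos v).le) hνint]
        have hsupp : U ⊆ Function.support ν ∩ U :=
          fun v hv => ⟨fun h0 => (hνpos v).ne' h0, hv⟩
        exact lt_of_lt_of_le hUpos (measure_mono hsupp)
      clear_value K
      set CR : ℝ := (5/2) * m * (1 + 3*R^2) with hCR
      have hCRpos : 0 < CR := by rw [hCR]; positivity
      clear_value CR
      have hev : ∀ᶠ n in atTop, ∀ v ∈ U, c/2 ≤ dot5 (w (φ n)) (aVec m v) := by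
        have hsmall : ∀ᶠ n in atTop, dist (w (φ n)) ω < (c/2)/CR := by
          rw [Metric.tendsto_atTop] at hφtend
          obtain ⟨N, hN⟩ := hφtend ((c/2)/CR) (by positivity)
          exact eventually_atTop.2 ⟨N, fun n hn => hN n hn⟩
        filter_upwards [hsmall] with n hn v hv
        have h1 : dot5 (w (φ n)) (aVec m v)
            = dot5 ω (aVec m v) + dot5 (w (φ n) - ω) (aVec m v) := by
          rw [dot5_sub_left]; ring
        have h2 : |dot5 (w (φ n) - ω) (aVec m v)|
            ≤ (5/2) * m * ‖w (φ n) - ω‖ * (1 + nsq v) := abs_dot5_aVec_le m hm.le _ v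
        have h3 : ‖w (φ n) - ω‖ < (c/2)/CR := by rwa [← dist_eq_norm]
        have h4 : (1 + nsq v) ≤ 1 + 3*R^2 := by linarith [hnsqU v hv]
        have h5 : (5/2) * m * ‖w (φ n) - ω‖ * (1 + nsq v) ≤ c/2 := by
          have hnn : (0:ℝ) ≤ 1 + nsq v := by linarith [nsq_nonneg v]
          have h6 : (5/2) * m * ‖w (φ n) - ω‖ * (1 + nsq v)
              ≤ (5/2) * m * ‖w (φ n) - ω‖ * (1 + 3*R^2) := by
            apply mul_le_mul_of_nonneg_left h4
            positivity
          have h7 : (5/2) * m * ‖w (φ n) - ω‖ * (1 + 3*R^2) = ‖w (φ n) - ω‖ * CR := by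
            rw [hCR]; ring
          rw [h7] at h6
          have h8 : ‖w (φ n) - ω‖ * CR ≤ ((c/2)/CR) * CR :=
            mul_le_mul_of_nonneg_right h3.le hCRpos.le
          have h9 : ((c/2)/CR) * CR = c/2 := div_mul_cancel₀ _ hCRpos.ne'
          linarith
        have h10 := le_of_abs_le h2
        have h11 := neg_le_of_abs_le h2
        have hcv : c < dot5 ω (aVec m v) := hv.1
        rw [h1]
        linarith
      -- choose a large index and derive a contradiction
      have harch : ∀ᶠ n : ℕ in atTop,
          max 1 (16 * (Cρ + |s| + 1) / (K * c^2)) < (n:ℝ) := by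
        obtain ⟨n0, hn0⟩ := exists_nat_gt (max 1 (16 * (Cρ + |s| + 1) / (K * c^2)))
        apply eventually_atTop.2 ⟨n0, fun n hn => lt_of_lt_of_le hn0 (Nat.cast_le.2 hn)⟩
      obtain ⟨n, hn1, hn2⟩ := (hev.and harch).exists
      -- lower bound for the integral
      have hlow : K * Real.exp (t n * (c/2)) ≤ ∫ v, ν v * expA m (x (φ n)) v := by
        have hs1 : ∫ v in U, ν v * expA m (x (φ n)) v ≤ ∫ v, ν v * expA m (x (φ n)) v :=
          setIntegral_le_integral (hInt n) (hIntNN n)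
        have hs2 : ∫ v in U, ν v * Real.exp (t n * (c/2))
            ≤ ∫ v in U, ν v * expA m (x (φ n)) v := by
          apply setIntegral_mono_on (hνint.mul_const _) ((hInt n).integrableOn) hUmeas
          intro v hv
          apply mul_le_mul_of_nonneg_left _ (hνpos v).le
          rw [expA, hdotx n (aVec m v)]
          apply Real.exp_le_exp.2
          exact mul_le_mul_of_nonneg_left (hn1 v hv) (htpos n).le
        have hs3 : ∫ v in U, ν v * Real.exp (t n * (c/2))
            = K * Real.exp (t n * (c/2)) := by
          rw [hK, integral_mul_const]
        linarith
      have hub2 : dot5 (x (φ n)) ρ ≤ t n * Cρ := by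
        have := le_of_abs_le (habs (x (φ n)))
        calc dot5 (x (φ n)) ρ ≤ ‖x (φ n)‖ * Cρ := this
          _ = t n * Cρ := by rw [ht]
      have hFlow : K * Real.exp (t n * (c/2)) - t n * Cρ ≤ F (x (φ n)) := by
        rw [hFval]
        have hA := sub_le_sub_right hlow (t n * Cρ)
        have hB := sub_le_sub_left hub2 (∫ v, ν v * expA m (x (φ n)) v)
        exact le_trans hA hB
      -- arithmetic contradiction
      have htn : max 1 (16 * (Cρ + |s| + 1) / (K * c^2)) < t n :=
        lt_of_lt_of_le hn2 (htlb n)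
      have htn1 : 1 < t n := lt_of_le_of_lt (le_max_left _ _) htn
      have htn2 : 16 * (Cρ + |s| + 1) / (K * c^2) < t n :=
        lt_of_le_of_lt (le_max_right _ _) htn
      have hbig : s < K * Real.exp (t n * (c/2)) - t n * Cρ :=
        coercive_arithA hKpos hcpos hCρ0 htn1 htn2
      exact absurd (hFle n) (not_le.2 (lt_of_lt_of_le hbig hFlow))
    · -- Case B : the exponent is ≤ 0 everywhere in direction ω
      replace hcase : ∀ v : V3, dot5 ω (aVec m v) ≤ 0 :=
        fun v => le_of_not_gt (fun h => hcase ⟨v, h⟩)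
      have hωne : ω ≠ 0 := by
        intro h
        rw [h, norm_zero] at hω1
        norm_num at hω1
      set q : V3 → ℝ := fun v => dot5 ω (aVec m v) with hq
      have hqmeas : Measurable q := (continuous_dot5_aVec m ω).measurable
      have hqint : Integrable (fun v => ν v * q v * f v) := by
        apply integrable_nu_gf ν f q hνmeas hfmeas hqmeas hf0 (fun v => (hνpos v).le)
          ((5/2) * m * ‖ω‖) _ hfint
        intro v
        exact abs_dot5_aVec_le m hm.le ω v
      have hZ : volume {v : V3 | q v = 0} = 0 := aVec_zero_null m hm ω hωne
      have hneg : (∫ v, ν v * q v * f v) < 0 := by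
        have hpos : 0 < ∫ v, -(ν v * q v * f v) := by
          rw [integral_pos_iff_support_of_nonneg_ae]
          · have hfZ : 0 < volume {v : V3 | f v ≠ 0} := by
              rw [pos_iff_ne_zero]
              intro h0
              exact hfne (ae_iff.2 h0)
            have hdiff : volume ({v : V3 | f v ≠ 0} \ {v : V3 | q v = 0})
                = volume {v : V3 | f v ≠ 0} := measure_diff_null hZ
            have hsub : ({v : V3 | f v ≠ 0} \ {v : V3 | q v = 0})
                ⊆ Function.support fun v => -(ν v * q v * f v) := by
              intro v hv
              have hfv : f v ≠ 0 := hv.1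
              have hqv : q v ≠ 0 := hv.2
              simp only [Function.mem_support, neg_ne_zero]
              exact mul_ne_zero (mul_ne_zero (hνpos v).ne' hqv) hfv
            calc (0:ENNReal) < volume {v : V3 | f v ≠ 0} := hfZ
              _ = volume ({v : V3 | f v ≠ 0} \ {v : V3 | q v = 0}) := hdiff.symm
              _ ≤ volume (Function.support fun v => -(ν v * q v * f v)) :=
                  measure_mono hsub
          · apply Eventually.of_forall
            intro v
            have h1 : ν v * q v ≤ 0 :=
              mul_nonpos_of_nonneg_of_nonpos (hνpos v).le (hcase v)
            have h2 : ν v * q v * f v ≤ 0 :=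
              mul_nonpos_of_nonpos_of_nonneg h1 (hf0 v)
            simp only [Pi.zero_apply]
            linarith
          · exact hqint.neg
        have h3 : (∫ v, -(ν v * q v * f v)) = -(∫ v, ν v * q v * f v) := integral_neg _
        linarith
      set κ : ℝ := -(∫ v, ν v * q v * f v) with hκ
      have hκpos : 0 < κ := by rw [hκ]; linarith
      have hωρ : dot5 ω ρ = -κ := by
        rw [hκ, neg_neg, hρ,
          dot5_momVec m ν f hm hνmeas (fun v => (hνpos v).le) hfmeas hf0 hfint ω]
      clear_value κ
      have hev : ∀ᶠ n in atTop, dot5 (w (φ n)) ρ ≤ -(κ/2) := by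
        have hsmall : ∀ᶠ n in atTop, dist (w (φ n)) ω < (κ/2)/(Cρ+1) := by
          rw [Metric.tendsto_atTop] at hφtend
          obtain ⟨N, hN⟩ := hφtend ((κ/2)/(Cρ+1)) (by positivity)
          exact eventually_atTop.2 ⟨N, fun n hn => hN n hn⟩
        filter_upwards [hsmall] with n hn
        have h1 : dot5 (w (φ n)) ρ = dot5 ω ρ + dot5 (w (φ n) - ω) ρ := by
          rw [dot5_sub_left]; ring
        have h2 : |dot5 (w (φ n) - ω) ρ| ≤ ‖w (φ n) - ω‖ * Cρ := habs _
        have h3 : ‖w (φ n) - ω‖ < (κ/2)/(Cρ+1) := by rwa [← dist_eq_norm]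
        have h4 : ‖w (φ n) - ω‖ * Cρ ≤ κ/2 := by
          have h5 : ‖w (φ n) - ω‖ * Cρ ≤ ((κ/2)/(Cρ+1)) * Cρ := by
            apply mul_le_mul_of_nonneg_right h3.le hCρ0
          have h6 : ((κ/2)/(Cρ+1)) * Cρ ≤ ((κ/2)/(Cρ+1)) * (Cρ+1) := by
            apply mul_le_mul_of_nonneg_left (by linarith) (by positivity)
          have h7 : ((κ/2)/(Cρ+1)) * (Cρ+1) = κ/2 := div_mul_cancel₀ _ (by positivity)
          linarith
        have h8 := le_of_abs_le h2
        rw [h1, hωρ]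
        linarith
      have harch : ∀ᶠ n : ℕ in atTop, 2 * (|s| + 1) / κ < (n:ℝ) := by
        obtain ⟨n0, hn0⟩ := exists_nat_gt (2 * (|s| + 1) / κ)
        exact eventually_atTop.2 ⟨n0, fun n hn => lt_of_lt_of_le hn0 (Nat.cast_le.2 hn)⟩
      obtain ⟨n, hn1, hn2⟩ := (hev.and harch).exists
      have hIpos : 0 ≤ ∫ v, ν v * expA m (x (φ n)) v :=
        integral_nonneg fun v => (mul_pos (hνpos v) (expA_pos _ _ _)).le
      have hdlow : dot5 (x (φ n)) ρ ≤ t n * (-(κ/2)) := by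
        rw [hdotx n ρ]
        exact mul_le_mul_of_nonneg_left hn1 (htpos n).le
      have hFlow : t n * (κ/2) ≤ F (x (φ n)) := by
        rw [hFval]
        nlinarith
      have htn : 2 * (|s| + 1) / κ < t n := lt_of_lt_of_le hn2 (htlb n)
      have hbig : s < t n * (κ/2) := coercive_arithB hκpos htn
      exact absurd (hFle n) (not_le.2 (lt_of_lt_of_le hbig hFlow))
  -- conclude
  have hScomp : IsCompact S := Metric.isCompact_of_isClosed_isBounded hScl hSbd
  have hFcontOn : ContinuousOn F S := fun l hl =>
    (continuousAt_zdual m hm ν hνmeas hνpos hass ρ l hl.1).continuousWithinAt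
  obtain ⟨lstar, hlstarS, hmin⟩ := hScomp.exists_isMinOn ⟨l₀, hl₀S⟩ hFcontOn
  refine ⟨lstar, hlstarS.1, ?_⟩
  intro l hl
  by_cases hlS : l ∈ S
  · exact hmin hlS
  · have hns : ¬ F l ≤ s := fun h => hlS ⟨hl, h⟩
    have h1 : s < F l := lt_of_not_ge hns
    have h2 : F lstar ≤ s := by rw [hs]; exact hmin hl₀S
    exact le_trans h2 h1.le
/-- for `ρ = μ(f)` with `f ≥ 0` not a.e. zero and `ν(1+|v|²)f`
integrable, the dual function `λ ↦ z(λ;ρ)` attains its infimum over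
`Λ = {λ₂ < 0}` at a unique point `λ* ∈ Λ`. -/
theorem dual_attains_min
    (m : ℝ) (hm : 0 < m)
    (ν : V3 → ℝ) (hνmeas : Measurable ν) (hνpos : ∀ v, 0 < ν v)
    (hass : ∀ l : L5, Integrable (fun v => ν v * expA m l v) ↔ l.2.2 < 0)
    (hass2 : ∀ l : L5, l.2.2 < 0 →
      Integrable (fun v => ν v * (1 + nsq v) * expA m l v))
    (f : V3 → ℝ) (hfmeas : Measurable f) (hf0 : ∀ v, 0 ≤ f v)
    (hfne : ¬ f =ᵐ[volume] (fun _ => (0 : ℝ)))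
    (hfint : Integrable (fun v => ν v * (1 + nsq v) * f v)) :
    ∃! lstar : L5, lstar.2.2 < 0 ∧
      ∀ l : L5, l.2.2 < 0 →
        zdual m ν lstar (momVec m ν f) ≤ zdual m ν l (momVec m ν f) := by
  obtain ⟨lstar, hls, hmin⟩ := exists_min m hm ν hνmeas hνpos hass f hfmeas hf0 hfne hfint
  refine ⟨lstar, ⟨hls, hmin⟩, ?_⟩
  rintro l' ⟨hl', hmin'⟩
  by_contra hne
  have heq : zdual m ν l' (momVec m ν f) = zdual m ν lstar (momVec m ν f) :=
    le_antisymm (hmin' lstar hls) (hmin l' hl')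
  set ρ : L5 := momVec m ν f with hρ
  set mid : L5 := (1/2 : ℝ) • (l' + lstar) with hmid
  have hmid2 : mid.2.2 = (l'.2.2 + lstar.2.2)/2 := by
    rw [hmid]
    simp only [Prod.smul_snd, Prod.snd_add, smul_eq_mul]
    ring
  have hmidneg : mid.2.2 < 0 := by rw [hmid2]; linarith
  have hd : ∀ v : V3, dot5 mid (aVec m v)
      = (1/2) * dot5 l' (aVec m v) + (1/2) * dot5 lstar (aVec m v) := by
    intro v
    rw [hmid, dot5_smul_left, dot5_add_left]
    ring
  have hdρ : dot5 mid ρ = (1/2) * dot5 l' ρ + (1/2) * dot5 lstar ρ := by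
    rw [hmid, dot5_smul_left, dot5_add_left]
    ring
  set g1 : V3 → ℝ := fun v => ν v * expA m l' v with hg1
  set g2 : V3 → ℝ := fun v => ν v * expA m lstar v with hg2
  set gm : V3 → ℝ := fun v => ν v * expA m mid v with hgm
  have hI1 : Integrable g1 := (hass l').2 hl'
  have hI2 : Integrable g2 := (hass lstar).2 hls
  have hIm : Integrable gm := (hass mid).2 hmidneg
  set D : V3 → ℝ := fun v => (g1 v + g2 v)/2 - gm v with hD
  have hDint : Integrable D := ((hI1.add hI2).div_const 2).sub hIm
  have hDnn : ∀ v, 0 ≤ D v := by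
    intro v
    have hconv := convexOn_exp.2 (Set.mem_univ (dot5 l' (aVec m v)))
      (Set.mem_univ (dot5 lstar (aVec m v))) (by norm_num : (0:ℝ) ≤ 1/2)
      (by norm_num : (0:ℝ) ≤ 1/2) (by norm_num : (1:ℝ)/2 + 1/2 = 1)
    simp only [smul_eq_mul] at hconv
    have hexp : expA m mid v ≤ (1/2) * expA m l' v + (1/2) * expA m lstar v := by
      rw [expA, expA, expA, hd v]
      exact hconv
    have hν0 := (hνpos v).le
    rw [hD]
    simp only [hg1, hg2, hgm]
    nlinarith [mul_le_mul_of_nonneg_left hexp hν0]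
  have hDposae : ∀ᵐ v ∂(volume : Measure V3), 0 < D v := by
    have hZ : volume {v : V3 | dot5 (l' - lstar) (aVec m v) = 0} = 0 :=
      aVec_zero_null m hm _ (sub_ne_zero.2 hne)
    rw [ae_iff]
    apply measure_mono_null _ hZ
    intro v hv
    simp only [Set.mem_setOf_eq, not_lt] at hv
    simp only [Set.mem_setOf_eq]
    by_contra hne2
    have hne3 : dot5 l' (aVec m v) ≠ dot5 lstar (aVec m v) := by
      intro h
      apply hne2
      rw [dot5_sub_left, h, sub_self]
    have hstrict := strictConvexOn_exp.2 (Set.mem_univ (dot5 l' (aVec m v)))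
      (Set.mem_univ (dot5 lstar (aVec m v))) hne3 (by norm_num : (0:ℝ) < 1/2)
      (by norm_num : (0:ℝ) < 1/2) (by norm_num : (1:ℝ)/2 + 1/2 = 1)
    simp only [smul_eq_mul] at hstrict
    have hexp : expA m mid v < (1/2) * expA m l' v + (1/2) * expA m lstar v := by
      rw [expA, expA, expA, hd v]
      exact hstrict
    have h2 := mul_lt_mul_of_pos_left hexp (hνpos v)
    have hDv : 0 < D v := by
      rw [hD]
      simp only [hg1, hg2, hgm]
      nlinarith
    linarith
  have hDpos : 0 < ∫ v, D v := by
    rw [integral_pos_iff_support_of_nonneg_ae (Eventually.of_forall hDnn) hDint]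
    by_contra h0
    push_neg at h0
    have h0' : volume (Function.support D) = 0 := le_antisymm h0 zero_le
    have hcompl : volume {v : V3 | ¬ (0 < D v)} = 0 := ae_iff.1 hDposae
    have huniv : (Set.univ : Set V3) ⊆ Function.support D ∪ {v : V3 | ¬ (0 < D v)} := by
      intro v _
      by_cases hv : D v = 0
      · right
        simp only [Set.mem_setOf_eq, hv, not_lt, le_refl]
      · left
        exact hv
    have hle : volume (Set.univ : Set V3)
        ≤ volume (Function.support D) + volume {v : V3 | ¬ (0 < D v)} :=
      (measure_mono huniv).trans (measure_union_le _ _)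
    rw [h0', hcompl] at hle
    simp only [add_zero, nonpos_iff_eq_zero] at hle
    exact absurd hle (isOpen_univ.measure_pos (volume : Measure V3) ⟨0, trivial⟩).ne'
  have hint_ineq : (∫ v, gm v) < ((∫ v, g1 v) + (∫ v, g2 v))/2 := by
    have h1 : (∫ v, D v) = ((∫ v, g1 v) + (∫ v, g2 v))/2 - ∫ v, gm v := by
      rw [hD]
      have hI12 : Integrable (fun v => (g1 v + g2 v)/2) := by
        have h5 := (hI1.add hI2).div_const 2
        simpa using h5
      rw [integral_sub hI12 hIm]
      congr 1
      rw [integral_div]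
      rw [integral_add hI1 hI2]
    linarith
  have e1 : zdual m ν mid ρ = (∫ v, gm v) - dot5 mid ρ := rfl
  have e2 : zdual m ν l' ρ = (∫ v, g1 v) - dot5 l' ρ := rfl
  have e3 : zdual m ν lstar ρ = (∫ v, g2 v) - dot5 lstar ρ := rfl
  have hFmid : zdual m ν mid ρ < zdual m ν lstar ρ := by
    rw [e1, e3]
    have h4 : (∫ v, g1 v) - dot5 l' ρ = (∫ v, g2 v) - dot5 lstar ρ := by
      rw [← e2, ← e3]
      exact heq
    linarith [hdρ, hint_ineq]
  exact absurd (hmin mid hmidneg) (not_le.2 hFmid)
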